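/- Let ψ : (α,β) → (0,∞) be a second continuous function, with associated spaces C_ψ^{(∞)} defined using Y := ψ∂_t. If the quotient φ/ψ extends to a function on [α,β] belonging to C_ψ^{(∞)}, then C_ψ^{(∞)} ⊂ C_φ^{(∞)}. -/

import Mathlib

open Real Set Filter Topology

/-- The open interval `(α, β)` of real numbers, where `α β` are extended reals. -/
def EI (α β : EReal) : Set ℝ := {x : ℝ | α < (x : EReal) ∧ (x : EReal) < β}

/-- `u : ℝ → ℝ` (thought of as a function on `(α, β)`) extends to a continuous
function on `[α, β] ⊆ EReal`. -/
def ContExt (α β : EReal) (u : ℝ → ℝ) : Prop :=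
  ∃ g : EReal → ℝ, ContinuousOn g (Set.Icc α β) ∧
    ∀ x : ℝ, x ∈ EI α β → g (x : EReal) = u x

/-- The operator `X u := φ · u′`. -/
noncomputable def Xop (φ u : ℝ → ℝ) : ℝ → ℝ := fun x => φ x * deriv u x

/-- The iterates `X^k u`. -/
noncomputable def Xiter (φ : ℝ → ℝ) : ℕ → (ℝ → ℝ) → (ℝ → ℝ)
  | 0, u => u
  | n + 1, u => Xop φ (Xiter φ n u)

/-- The space `C_φ^{(n)}`: inductively, `C_φ^{(0)}` consists of the functions having a
continuous extension to `[α, β]`, and `u ∈ C_φ^{(n+1)}` iff `u ∈ C_φ^{(n)}`, `X^n u` is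
differentiable on `(α, β)`, and `X^{n+1} u` extends to a continuous function on `[α, β]`. -/
def CN (α β : EReal) (φ : ℝ → ℝ) : ℕ → Set (ℝ → ℝ)
  | 0 => {u | ContExt α β u}
  | n + 1 => {u | u ∈ CN α β φ n ∧
      (∀ x ∈ EI α β, DifferentiableAt ℝ (Xiter φ n u) x) ∧
      ContExt α β (Xiter φ (n + 1) u)}

/-- The space `C_φ^{(∞)} := ⋂ₙ C_φ^{(n)}`. -/
def Cinf (α β : EReal) (φ : ℝ → ℝ) : Set (ℝ → ℝ) := ⋂ n : ℕ, CN α β φ n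

/-- The spaces `C_φ^{(n)}` for `n ∈ ℤ₊ ∪ {∞}`. -/
def CNE (α β : EReal) (φ : ℝ → ℝ) (n : ℕ∞) : Set (ℝ → ℝ) :=
  WithTop.recTopCoe (Cinf α β φ) (fun k => CN α β φ k) n

lemma isOpen_EI (α β : EReal) : IsOpen (EI α β) := by
  have h : EI α β = (fun x : ℝ => (x : EReal)) ⁻¹' (Set.Ioi α ∩ Set.Iio β) := rfl
  rw [h]
  exact (isOpen_Ioi.inter isOpen_Iio).preimage continuous_coe_real_ereal

lemma xiter_congr {α β : EReal} {φ u v : ℝ → ℝ}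
    (h : ∀ x ∈ EI α β, u x = v x) :
    ∀ n, ∀ x ∈ EI α β, Xiter φ n u x = Xiter φ n v x := by
  intro n
  induction n with
  | zero => exact h
  | succ n ih =>
      intro x hx
      have hev : Xiter φ n u =ᶠ[nhds x] Xiter φ n v :=
        Filter.eventuallyEq_of_mem ((isOpen_EI α β).mem_nhds hx) (fun y hy => ih y hy)
      show φ x * deriv (Xiter φ n u) x = φ x * deriv (Xiter φ n v) x
      rw [hev.deriv_eq]

lemma contExt_congr {α β : EReal} {u v : ℝ → ℝ} (h : ContExt α β u)
    (he : ∀ x ∈ EI α β, u x = v x) : ContExt α β v := by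
  obtain ⟨g, hg, hgu⟩ := h
  exact ⟨g, hg, fun x hx => (hgu x hx).trans (he x hx)⟩

lemma contExt_add {α β : EReal} {u v : ℝ → ℝ} (h1 : ContExt α β u) (h2 : ContExt α β v) :
    ContExt α β (fun x => u x + v x) := by
  obtain ⟨g, hg, hgu⟩ := h1
  obtain ⟨g', hg', hgv⟩ := h2
  refine ⟨fun e => g e + g' e, hg.add hg', fun x hx => ?_⟩
  show g x + g' x = u x + v x
  rw [hgu x hx, hgv x hx]

lemma contExt_mul {α β : EReal} {u v : ℝ → ℝ} (h1 : ContExt α β u) (h2 : ContExt α β v) :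
    ContExt α β (fun x => u x * v x) := by
  obtain ⟨g, hg, hgu⟩ := h1
  obtain ⟨g', hg', hgv⟩ := h2
  refine ⟨fun e => g e * g' e, hg.mul hg', fun x hx => ?_⟩
  show g x * g' x = u x * v x
  rw [hgu x hx, hgv x hx]

lemma cn_congr {α β : EReal} {ψ : ℝ → ℝ} :
    ∀ n, ∀ u v : ℝ → ℝ, u ∈ CN α β ψ n → (∀ x ∈ EI α β, u x = v x) → v ∈ CN α β ψ n := by
  intro n
  induction n with
  | zero => exact fun u v h he => contExt_congr h he
  | succ n ih =>
      intro u v h he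
      refine ⟨ih u v h.1 he, ?_, contExt_congr h.2.2 (xiter_congr he (n + 1))⟩
      intro x hx
      have hev : Xiter ψ n v =ᶠ[nhds x] Xiter ψ n u :=
        Filter.eventuallyEq_of_mem ((isOpen_EI α β).mem_nhds hx)
          (fun y hy => (xiter_congr he n y hy).symm)
      exact (h.2.1 x hx).congr_of_eventuallyEq hev

lemma xiter_shift {φ u : ℝ → ℝ} : ∀ n, Xiter φ n (Xop φ u) = Xiter φ (n + 1) u := by
  intro n
  induction n with
  | zero => rfl
  | succ n ih => show Xop φ (Xiter φ n (Xop φ u)) = _; rw [ih]; rfl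

lemma cn_shift {α β : EReal} {ψ : ℝ → ℝ} :
    ∀ n, ∀ u : ℝ → ℝ, u ∈ CN α β ψ (n + 1) → Xop ψ u ∈ CN α β ψ n := by
  intro n
  induction n with
  | zero => exact fun u h => h.2.2
  | succ n ih =>
      intro u h
      refine ⟨ih u h.1, ?_, ?_⟩
      · rw [xiter_shift n]; exact h.2.1
      · rw [xiter_shift (n + 1)]; exact h.2.2

lemma cinf_mem {α β : EReal} {ψ : ℝ → ℝ} {u : ℝ → ℝ} (h : u ∈ Cinf α β ψ) (n : ℕ) :
    u ∈ CN α β ψ n := Set.mem_iInter.1 h n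

lemma cinf_shift {α β : EReal} {ψ : ℝ → ℝ} {u : ℝ → ℝ} (h : u ∈ Cinf α β ψ) :
    Xop ψ u ∈ Cinf α β ψ :=
  Set.mem_iInter.2 fun n => cn_shift n u (cinf_mem h (n + 1))

lemma cn_contExt {α β : EReal} {ψ : ℝ → ℝ} :
    ∀ n, ∀ u : ℝ → ℝ, u ∈ CN α β ψ n → ContExt α β (Xiter ψ n u) := by
  intro n u h
  cases n with
  | zero => exact h
  | succ n => exact h.2.2

lemma cinf_diff {α β : EReal} {ψ : ℝ → ℝ} {u : ℝ → ℝ} (h : u ∈ Cinf α β ψ) :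
    ∀ x ∈ EI α β, DifferentiableAt ℝ u x :=
  (cinf_mem h 1).2.1

lemma cn_add {α β : EReal} {ψ : ℝ → ℝ} :
    ∀ n, ∀ u v : ℝ → ℝ, u ∈ CN α β ψ n → v ∈ CN α β ψ n →
      (fun x => u x + v x) ∈ CN α β ψ n ∧
      ∀ x ∈ EI α β, Xiter ψ n (fun x => u x + v x) x = Xiter ψ n u x + Xiter ψ n v x := by
  intro n
  induction n with
  | zero => exact fun u v hu hv => ⟨contExt_add hu hv, fun x _ => rfl⟩
  | succ n ih =>
      intro u v hu hv
      obtain ⟨hmem, heq⟩ := ih u v hu.1 hv.1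
      have hev : ∀ x ∈ EI α β, Xiter ψ n (fun x => u x + v x) =ᶠ[nhds x]
          (fun y => Xiter ψ n u y + Xiter ψ n v y) := fun x hx =>
        Filter.eventuallyEq_of_mem ((isOpen_EI α β).mem_nhds hx) (fun y hy => heq y hy)
      have hdiff : ∀ x ∈ EI α β, DifferentiableAt ℝ (Xiter ψ n (fun x => u x + v x)) x :=
        fun x hx => ((hu.2.1 x hx).add (hv.2.1 x hx)).congr_of_eventuallyEq (hev x hx)
      have heq' : ∀ x ∈ EI α β, Xiter ψ (n + 1) (fun x => u x + v x) x =
          Xiter ψ (n + 1) u x + Xiter ψ (n + 1) v x := by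
        intro x hx
        show ψ x * deriv (Xiter ψ n (fun x => u x + v x)) x =
          ψ x * deriv (Xiter ψ n u) x + ψ x * deriv (Xiter ψ n v) x
        rw [(hev x hx).deriv_eq, deriv_fun_add (hu.2.1 x hx) (hv.2.1 x hx)]
        ring
      refine ⟨⟨hmem, hdiff, ?_⟩, heq'⟩
      exact contExt_congr (contExt_add hu.2.2 hv.2.2) (fun x hx => (heq' x hx).symm)

lemma xop_mul {ψ u v : ℝ → ℝ} {x : ℝ} (hu : DifferentiableAt ℝ u x)
    (hv : DifferentiableAt ℝ v x) :
    Xop ψ (fun y => u y * v y) x = Xop ψ u x * v x + u x * Xop ψ v x := by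
  show ψ x * deriv (fun y => u y * v y) x = ψ x * deriv u x * v x + u x * (ψ x * deriv v x)
  rw [deriv_fun_mul hu hv]
  ring

lemma cinf_mul_cn {α β : EReal} {ψ : ℝ → ℝ} :
    ∀ n, ∀ u v : ℝ → ℝ, u ∈ Cinf α β ψ → v ∈ Cinf α β ψ →
      (fun x => u x * v x) ∈ CN α β ψ n := by
  intro n
  induction n with
  | zero => exact fun u v hu hv => contExt_mul (cinf_mem hu 0) (cinf_mem hv 0)
  | succ n ih =>
      intro u v hu hv
      have hdu := cinf_diff hu
      have hdv := cinf_diff hv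
      have hs1 : (fun x => Xop ψ u x * v x) ∈ CN α β ψ n := ih _ _ (cinf_shift hu) hv
      have hs2 : (fun x => u x * Xop ψ v x) ∈ CN α β ψ n := ih _ _ hu (cinf_shift hv)
      have hs : (fun x => Xop ψ u x * v x + u x * Xop ψ v x) ∈ CN α β ψ n :=
        (cn_add n _ _ hs1 hs2).1
      have key : ∀ x ∈ EI α β, Xop ψ (fun y => u y * v y) x =
          (fun x => Xop ψ u x * v x + u x * Xop ψ v x) x :=
        fun x hx => xop_mul (hdu x hx) (hdv x hx)
      have hXeq : ∀ k, ∀ x ∈ EI α β, Xiter ψ (k + 1) (fun y => u y * v y) x =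
          Xiter ψ k (fun x => Xop ψ u x * v x + u x * Xop ψ v x) x := by
        intro k x hx
        rw [← xiter_shift k]
        exact xiter_congr key k x hx
      refine ⟨ih _ _ hu hv, ?_, ?_⟩
      · intro x hx
        cases n with
        | zero => exact (hdu x hx).mul (hdv x hx)
        | succ m =>
            have hev : Xiter ψ (m + 1) (fun y => u y * v y) =ᶠ[nhds x]
                Xiter ψ m (fun x => Xop ψ u x * v x + u x * Xop ψ v x) :=
              Filter.eventuallyEq_of_mem ((isOpen_EI α β).mem_nhds hx)
                (fun y hy => hXeq m y hy)
            exact (hs.2.1 x hx).congr_of_eventuallyEq hev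
      · exact contExt_congr (cn_contExt n _ hs) (fun x hx => (hXeq n x hx).symm)

lemma cinf_mul {α β : EReal} {ψ : ℝ → ℝ} {u v : ℝ → ℝ}
    (hu : u ∈ Cinf α β ψ) (hv : v ∈ Cinf α β ψ) :
    (fun x => u x * v x) ∈ Cinf α β ψ :=
  Set.mem_iInter.2 fun n => cinf_mul_cn n u v hu hv

/-- if `ψ : (α,β) → (0,∞)` is continuous and `φ/ψ` extends to a function on
`[α,β]` belonging to `C_ψ^{(∞)}`, then `C_ψ^{(∞)} ⊆ C_φ^{(∞)}`. -/

theorem Cpsi_subset_Cphi (α β : EReal) (hαβ : α < β) (φ : ℝ → ℝ)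
    (hφc : ContinuousOn φ (EI α β)) (hφpos : ∀ x ∈ EI α β, 0 < φ x)
    (ψ : ℝ → ℝ) (hψc : ContinuousOn ψ (EI α β)) (hψpos : ∀ x ∈ EI α β, 0 < ψ x)
    (q : ℝ → ℝ) (hq : ∀ x ∈ EI α β, q x = φ x / ψ x) (hqmem : q ∈ Cinf α β ψ) :
    Cinf α β ψ ⊆ Cinf α β φ := by
  intro u hu
  have hφeq : ∀ x ∈ EI α β, φ x = q x * ψ x := by
    intro x hx
    rw [hq x hx, div_mul_cancel₀ _ (hψpos x hx).ne']
  have claim : ∀ n : ℕ, u ∈ CN α β φ n ∧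
      ∃ w, w ∈ Cinf α β ψ ∧ ∀ x ∈ EI α β, Xiter φ n u x = w x := by
    intro n
    induction n with
    | zero => exact ⟨cinf_mem hu 0, u, hu, fun _ _ => rfl⟩
    | succ n ih =>
        obtain ⟨hmem, w, hw, heq⟩ := ih
        have hdw : ∀ x ∈ EI α β, DifferentiableAt ℝ w x := cinf_diff hw
        have hev : ∀ x ∈ EI α β, Xiter φ n u =ᶠ[nhds x] w := fun x hx =>
          Filter.eventuallyEq_of_mem ((isOpen_EI α β).mem_nhds hx) (fun y hy => heq y hy)
        have hdiff : ∀ x ∈ EI α β, DifferentiableAt ℝ (Xiter φ n u) x :=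
          fun x hx => (hdw x hx).congr_of_eventuallyEq (hev x hx)
        have hw' : (fun x => q x * Xop ψ w x) ∈ Cinf α β ψ :=
          cinf_mul hqmem (cinf_shift hw)
        have heq' : ∀ x ∈ EI α β, Xiter φ (n + 1) u x = (fun x => q x * Xop ψ w x) x := by
          intro x hx
          show φ x * deriv (Xiter φ n u) x = q x * (ψ x * deriv w x)
          rw [(hev x hx).deriv_eq, hφeq x hx]
          ring
        exact ⟨⟨hmem, hdiff,
          contExt_congr (cinf_mem hw' 0) (fun x hx => (heq' x hx).symm)⟩,
          _, hw', heq'⟩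
  exact Set.mem_iInter.2 fun n => (claim n).1
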